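/- For a finite MDP with target set B̂ ⊆ Ŝ and any memoryless scheduler σ, the reachability probability of B̂ in the induced DTMC P̂^σ lies between the limits of the min and max value iterations: for every ŝ ∈ Ŝ, ⨆ₙ minreach n ŝ ≤ Preach_{P̂^σ} ŝ ≤ ⨆ₙ maxreach n ŝ. -/
import Mathlib


open scoped Classical

/-- Minimum value-iteration sequence for reaching target set `B` in a finite MDP. -/
noncomputable def minreach {S A : Type*} [Fintype S]
    (Act : S → Finset A) (hAct : ∀ s, (Act s).Nonempty)
    (P : S → A → S → ℝ) (B : Set S) : ℕ → S → ℝ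
  | 0, s => if s ∈ B then 1 else 0
  | n + 1, s =>
      if s ∈ B then 1
      else (Act s).inf' (hAct s) fun α => ∑ s' : S, P s α s' * minreach Act hAct P B n s'

/-- Maximum value-iteration sequence for reaching target set `B` in a finite MDP. -/
noncomputable def maxreach {S A : Type*} [Fintype S]
    (Act : S → Finset A) (hAct : ∀ s, (Act s).Nonempty)
    (P : S → A → S → ℝ) (B : Set S) : ℕ → S → ℝ
  | 0, s => if s ∈ B then 1 else 0
  | n + 1, s =>
      if s ∈ B then 1
      else (Act s).sup' (hAct s) fun α => ∑ s' : S, P s α s' * maxreach Act hAct P B n s'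

/-- n-step reachability values of a target set `B` in a DTMC with transition
function `Q`. -/
noncomputable def reachN {S : Type*} [Fintype S] (Q : S → S → ℝ) (B : Set S) :
    ℕ → S → ℝ
  | 0, s => if s ∈ B then 1 else 0
  | n + 1, s => if s ∈ B then 1 else ∑ s' : S, Q s s' * reachN Q B n s'

/-- For a finite MDP with target set B̂ ⊆ Ŝ and any memoryless
scheduler σ, the reachability probability of B̂ in the induced DTMC
`P̂^σ ŝ ŝ' = P̂ ŝ (σ ŝ) ŝ'` lies between the limits of the min and max value
iterations: `⨆ₙ minreach n ŝ ≤ Preach_{P̂^σ} ŝ ≤ ⨆ₙ maxreach n ŝ`. -/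
theorem scheduler_reach_between_valueIteration_limits {S A : Type*}
    [Fintype S] [Nonempty S] [Fintype A]
    (Act : S → Finset A) (hAct : ∀ s, (Act s).Nonempty)
    (P : S → A → S → ℝ)
    (hP : ∀ (s : S) (α : A) (s' : S), 0 ≤ P s α s')
    (hsum : ∀ s : S, ∀ α ∈ Act s, ∑ s' : S, P s α s' = 1)
    (B : Set S)
    (σ : S → A) (hσ : ∀ s : S, σ s ∈ Act s) :
    ∀ s : S,
      (⨆ n : ℕ, minreach Act hAct P B n s) ≤
          (⨆ n : ℕ, reachN (fun a b => P a (σ a) b) B n s) ∧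
      (⨆ n : ℕ, reachN (fun a b => P a (σ a) b) B n s) ≤
          ⨆ n : ℕ, maxreach Act hAct P B n s := by
  classical
  -- upper bounds by 1
  have hmax1 : ∀ n s, maxreach Act hAct P B n s ≤ 1 := by
    intro n
    induction n with
    | zero => intro s; simp [maxreach]; split <;> norm_num
    | succ n ih =>
      intro s
      simp only [maxreach]
      split
      · exact le_rfl
      · apply Finset.sup'_le
        intro α hα
        calc ∑ s' : S, P s α s' * maxreach Act hAct P B n s'
            ≤ ∑ s' : S, P s α s' * 1 := by
              apply Finset.sum_le_sum
              intro s' _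
              exact mul_le_mul_of_nonneg_left (ih s') (hP s α s')
          _ = 1 := by simp [hsum s α hα]
  have hreach1 : ∀ n s, reachN (fun a b => P a (σ a) b) B n s ≤ 1 := by
    intro n
    induction n with
    | zero => intro s; simp [reachN]; split <;> norm_num
    | succ n ih =>
      intro s
      simp only [reachN]
      split
      · exact le_refl 1
      · calc ∑ s' : S, P s (σ s) s' * reachN (fun a b => P a (σ a) b) B n s'
            ≤ ∑ s' : S, P s (σ s) s' * 1 := by
              apply Finset.sum_le_sum
              intro s' _
              exact mul_le_mul_of_nonneg_left (ih s') (hP s (σ s) s')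
          _ = 1 := by simp [hsum s (σ s) (hσ s)]
  -- pointwise comparisons
  have hmin_le : ∀ n s, minreach Act hAct P B n s ≤ reachN (fun a b => P a (σ a) b) B n s := by
    intro n
    induction n with
    | zero => intro s; simp [minreach, reachN]
    | succ n ih =>
      intro s
      simp only [minreach, reachN]
      split
      · exact le_refl 1
      · refine le_trans (Finset.inf'_le _ (hσ s)) ?_
        apply Finset.sum_le_sum
        intro s' _
        exact mul_le_mul_of_nonneg_left (ih s') (hP s (σ s) s')
  have hle_max : ∀ n s, reachN (fun a b => P a (σ a) b) B n s ≤ maxreach Act hAct P B n s := by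
    intro n
    induction n with
    | zero => intro s; simp [maxreach, reachN]
    | succ n ih =>
      intro s
      simp only [maxreach, reachN]
      split
      · exact le_refl 1
      · refine le_trans ?_ (Finset.le_sup' _ (hσ s))
        apply Finset.sum_le_sum
        intro s' _
        exact mul_le_mul_of_nonneg_left (ih s') (hP s (σ s) s')
  intro s
  constructor
  · exact ciSup_mono ⟨1, fun x ⟨n, hn⟩ => hn ▸ hreach1 n s⟩ (fun n => hmin_le n s)
  · exact ciSup_mono ⟨1, fun x ⟨n, hn⟩ => hn ▸ hmax1 n s⟩ (fun n => hle_max n s)
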